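/- Let G be a finite non-abelian group and C = ⟨c⟩ a subgroup of G such that: C is cyclic of order a power of a prime r, C is characteristic in G, C ∩ Z(G) = {1}, and there exists a ∈ G inducing by conjugation on C an automorphism whose order is not a power of r. Let γ be a gamma function on G and suppose that γ(c') = ι(c'^{−σ}) for every c' ∈ C, for some function σ : C → C. Then either σ = 0 (i.e. C ≤ ker(γ)), or σ = 1 (i.e. γ(c') = ι(c'⁻¹) for all c' ∈ C, so that C ≤ ker(γ̃), where γ̃(x) = γ(x⁻¹)ι(x⁻¹)). -/

import Mathlib

/- Formalization of results from "Hopf-Galois structures on extensions of degree p²q and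
skew braces of order p²q: the cyclic Sylow p-subgroup case" (Campedel, Caranti, Del Corso).

Conventions: the paper composes permutations/automorphisms left-to-right and writes
`x^α` for the action; in Mathlib composition is right-to-left, so the paper's product
`αβ` is rendered as `β * α`, the paper's `x^α` as `α x`, and the paper's conjugate
`α^β = β⁻¹αβ` as `β * α * β⁻¹`. -/

namespace HGS

universe u v

variable {G : Type*} [Group G]

/-- A gamma function (GF) on `G`: a map `γ : G → Aut G` satisfying the gamma functional
equation `γ(g^{γ(h)}·h) = γ(g)γ(h)` (the right-hand side is the paper's product, which in
Mathlib's composition order reads `γ h * γ g`). -/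
def IsGammaFunction (γ : G → MulAut G) : Prop :=
  ∀ g h : G, γ (γ h g * h) = γ h * γ g

/-- The circle operation `g ∘ h = g^{γ(h)} · h` associated to a gamma function. -/
def circ (γ : G → MulAut G) (g h : G) : G := γ h g * h

/-- Auxiliary: lifting-the-exponent style divisibility. -/
lemma aux_pow_dvd {r : ℕ} (hr : r.Prime) {w : ℤ} (h : (r:ℤ) ∣ w - 1) :
    ∀ i : ℕ, ((r:ℤ)^(1+i)) ∣ w^(r^i) - 1 := by
  intro i
  induction i with
  | zero => simpa using h
  | succ n ih =>
    set v := w^(r^n) with hv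
    have hfac : (∑ j ∈ Finset.range r, v ^ j) * (v - 1) = v ^ r - 1 := geom_sum_mul v r
    have hw1 : (w : ZMod r) = 1 := by
      have := (ZMod.intCast_zmod_eq_zero_iff_dvd (w-1) r).mpr h
      push_cast at this
      linear_combination this
    have hsum : (r:ℤ) ∣ ∑ j ∈ Finset.range r, v ^ j := by
      have : ((∑ j ∈ Finset.range r, v ^ j : ℤ) : ZMod r) = 0 := by
        rw [hv]
        push_cast
        rw [hw1]
        simp
      exact (ZMod.intCast_zmod_eq_zero_iff_dvd _ r).mp this
    have hdvd : (r:ℤ)^(1+n) * r ∣ (v - 1) * (∑ j ∈ Finset.range r, v ^ j) :=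
      mul_dvd_mul ih hsum
    rw [mul_comm (v-1), hfac] at hdvd
    have heq : v ^ r = w ^ (r ^ (n+1)) := by rw [hv, ← pow_mul, pow_succ]
    have hee : (r:ℤ)^(1+(n+1)) = (r:ℤ)^(1+n)*r := by ring
    rw [hee, ← heq]
    exact hdvd

theorem duality_sigma_zero_or_one
    {G : Type u} [Group G] [Finite G] (hnab : ∃ x y : G, x * y ≠ y * x)
    {r : ℕ} (hr : r.Prime) (c : G) {k : ℕ} (hc : orderOf c = r ^ k)
    (hchar : (Subgroup.zpowers c).Characteristic)
    (hCZ : Subgroup.zpowers c ⊓ Subgroup.center G = ⊥)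
    (a : G) (φ : MulAut (Subgroup.zpowers c))
    (hφ : ∀ x : Subgroup.zpowers c, (φ x : G) = a⁻¹ * x * a)
    (hφord : ¬ ∃ m : ℕ, orderOf φ = r ^ m)
    (γ : G → MulAut G) (hγ : IsGammaFunction γ)
    (σ : G → G) (hσ : ∀ x ∈ Subgroup.zpowers c, σ x ∈ Subgroup.zpowers c)
    (hγσ : ∀ x ∈ Subgroup.zpowers c, γ x = MulAut.conj (σ x)) :
    (∀ x ∈ Subgroup.zpowers c, σ x = 1 ∧ γ x = 1) ∨
    (∀ x ∈ Subgroup.zpowers c, σ x = x ∧ γ x = MulAut.conj x ∧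
      MulAut.conj x * γ x⁻¹ = 1) := by
  classical
  have hcmem : c ∈ (Subgroup.zpowers c) := Subgroup.mem_zpowers c
  -- commutativity inside (Subgroup.zpowers c)
  have hcomm : ∀ u ∈ (Subgroup.zpowers c), ∀ v ∈ (Subgroup.zpowers c), u * v = v * u := by
    rintro u hu v hv
    obtain ⟨i, rfl⟩ := Subgroup.mem_zpowers_iff.mp hu
    obtain ⟨j, rfl⟩ := Subgroup.mem_zpowers_iff.mp hv
    rw [← zpow_add, ← zpow_add, add_comm]
  -- conjugation is injective on (Subgroup.zpowers c)
  have hinj : ∀ u ∈ (Subgroup.zpowers c), ∀ v ∈ (Subgroup.zpowers c), MulAut.conj u = MulAut.conj v → u = v := by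
    intro u hu v hv h
    have h1 : MulAut.conj (v⁻¹ * u) = 1 := by
      simp [map_mul, map_inv, h]
    have hz : v⁻¹ * u ∈ Subgroup.center G := by
      rw [Subgroup.mem_center_iff]
      intro g
      have h2 := DFunLike.congr_fun h1 g
      simp only [MulAut.conj_apply, MulAut.one_apply] at h2
      have h3 : g * (v⁻¹ * u) = (v⁻¹ * u) * g := by
        conv_lhs => rw [← h2]
        group
      exact h3
    have hmem : v⁻¹ * u ∈ (Subgroup.zpowers c) ⊓ Subgroup.center G :=
      ⟨(Subgroup.zpowers c).mul_mem ((Subgroup.zpowers c).inv_mem hv) hu, hz⟩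
    rw [hCZ] at hmem
    have := Subgroup.mem_bot.mp hmem
    exact (inv_mul_eq_one.mp this).symm
  -- γ 1 = 1
  have hγ1 : γ 1 = 1 := by
    have h := hγ 1 1
    simp only [map_one, mul_one] at h
    exact mul_eq_left.mp h.symm
  have hσ1 : σ 1 = 1 := by
    apply hinj _ (hσ 1 (Subgroup.zpowers c).one_mem) 1 (Subgroup.zpowers c).one_mem
    rw [← hγσ 1 (Subgroup.zpowers c).one_mem, hγ1, map_one]
  -- σ is multiplicative on (Subgroup.zpowers c)
  have hσmul : ∀ u ∈ (Subgroup.zpowers c), ∀ v ∈ (Subgroup.zpowers c), σ (u * v) = σ u * σ v := by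
    intro u hu v hv
    have h1 : γ v u = u := by
      rw [hγσ v hv, MulAut.conj_apply, hcomm _ (hσ v hv) u hu, mul_assoc,
        mul_inv_cancel, mul_one]
    have h2 := hγ u v
    rw [h1] at h2
    have h3 : MulAut.conj (σ (u * v)) = MulAut.conj (σ u * σ v) :=
      calc MulAut.conj (σ (u * v)) = γ (u * v) := (hγσ _ ((Subgroup.zpowers c).mul_mem hu hv)).symm
        _ = γ v * γ u := h2
        _ = MulAut.conj (σ v) * MulAut.conj (σ u) := by rw [hγσ v hv, hγσ u hu]
        _ = MulAut.conj (σ v * σ u) := (map_mul _ _ _).symm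
        _ = MulAut.conj (σ u * σ v) := by rw [hcomm _ (hσ v hv) _ (hσ u hu)]
    exact hinj _ (hσ _ ((Subgroup.zpowers c).mul_mem hu hv)) _ ((Subgroup.zpowers c).mul_mem (hσ u hu) (hσ v hv)) h3
  -- σ on (Subgroup.zpowers c) is the power map x ↦ x ^ m
  obtain ⟨m, hm⟩ : ∃ m : ℤ, c ^ m = σ c := Subgroup.mem_zpowers_iff.mp (hσ c hcmem)
  have hσinv : σ c⁻¹ = (σ c)⁻¹ := by
    have h := hσmul c hcmem c⁻¹ ((Subgroup.zpowers c).inv_mem hcmem)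
    rw [mul_inv_cancel, hσ1] at h
    exact (mul_eq_one_iff_inv_eq.mp h.symm).symm
  have key : ∀ z : ℤ, σ (c ^ z) = (σ c) ^ z := by
    intro z
    induction z using Int.induction_on with
    | zero => simpa using hσ1
    | succ n ih =>
      rw [zpow_add, zpow_one, hσmul _ ((Subgroup.zpowers c).zpow_mem hcmem _) c hcmem, ih,
        zpow_add, zpow_one]
    | pred n ih =>
      have he : (-(n:ℤ) - 1) = (-(n:ℤ)) + (-1) := by ring
      rw [he, zpow_add, hσmul _ ((Subgroup.zpowers c).zpow_mem hcmem _) _ ((Subgroup.zpowers c).zpow_mem hcmem _), ih,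
        zpow_add]
      congr 1
      rw [zpow_neg_one, zpow_neg_one, hσinv]
  have hσpow : ∀ x ∈ (Subgroup.zpowers c), σ x = x ^ m := by
    intro x hx
    obtain ⟨z, rfl⟩ := Subgroup.mem_zpowers_iff.mp hx
    rw [key z, ← hm, ← zpow_mul, ← zpow_mul, mul_comm z m]
  -- automorphisms preserve (Subgroup.zpowers c)
  have hmemA : ∀ (α : MulAut G), ∀ x ∈ (Subgroup.zpowers c), α x ∈ (Subgroup.zpowers c) := by
    intro α x hx
    have h := hchar.fixed α
    rw [← h] at hx
    exact Subgroup.mem_comap.mp hx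
  -- conjugating conj
  have hconjconj : ∀ (α : MulAut G) (g : G),
      α * MulAut.conj g * α⁻¹ = MulAut.conj (α g) := by
    intro α g
    ext x
    simp [MulAut.conj_apply, mul_assoc]
  set t : ℤ := m - m * m with ht
  set A := γ a with hA
  set b := A⁻¹ a⁻¹ with hb
  have hAb : A b = a⁻¹ := by rw [hb]; exact A.apply_symm_apply a⁻¹
  have hγb : γ b = A⁻¹ := by
    have h2 := hγ b a
    rw [← hA, hAb, inv_mul_cancel, hγ1] at h2
    exact (eq_inv_of_mul_eq_one_right h2.symm)
  -- main computation: φ fixes u ^ t for every u in (Subgroup.zpowers c)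
  have main : ∀ u : (Subgroup.zpowers c), φ (u ^ t) = u ^ t := by
    intro u
    set x := A⁻¹ (u : G) with hx
    have hxC : x ∈ (Subgroup.zpowers c) := hmemA A⁻¹ _ u.2
    have hAx : A x = (u : G) := by rw [hx]; exact A.apply_symm_apply _
    have h1 := hγ x a
    rw [← hA] at h1
    set z := γ (A x * a) b * (A x * a) with hz
    have hγz := hγ b (A x * a)
    rw [← hz, h1, hγb] at hγz
    have hγz2 : γ z = MulAut.conj (A (σ x)) := by
      rw [hγz, hγσ x hxC, hconjconj]
    have hzval : z = A (σ x) * (a⁻¹ * ((A (σ x))⁻¹ * A x) * a) := by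
      rw [hz, h1, MulAut.mul_apply, hγσ x hxC, MulAut.conj_apply,
        map_mul, map_mul, map_inv, hAb]
      group
    set v : (Subgroup.zpowers c) := ⟨A (σ x), hmemA A _ (hσ x hxC)⟩ with hv
    have hvcoe : (v : G) = A (σ x) := rfl
    have hcoe : ((v * φ (v⁻¹ * u) : (Subgroup.zpowers c)) : G) = (v : G) * (a⁻¹ * ((v : G)⁻¹ * (u : G)) * a) := by
      rw [Subgroup.coe_mul, hφ (v⁻¹ * u), Subgroup.coe_mul, Subgroup.coe_inv]
    have hzz : z = ((v * φ (v⁻¹ * u) : (Subgroup.zpowers c)) : G) := by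
      rw [hzval, hcoe, hvcoe, hAx]
    have hzC : z ∈ (Subgroup.zpowers c) := by rw [hzz]; exact (v * φ (v⁻¹ * u)).2
    set Z : (Subgroup.zpowers c) := ⟨z, hzC⟩ with hZdef
    have hZ : Z = v * φ (v⁻¹ * u) := Subtype.ext hzz
    have hσz : σ z = A (σ x) :=
      hinj _ (hσ z hzC) _ (hmemA A _ (hσ x hxC)) ((hγσ z hzC).symm.trans hγz2)
    have hσx' : σ x = x ^ m := hσpow x hxC
    have hσz' : σ z = z ^ m := hσpow z hzC
    have h5 : z ^ m = (u : G) ^ m := by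
      rw [← hσz', hσz, hσx', map_zpow, hAx]
    have hvu : v = u ^ m := by
      apply Subtype.ext
      rw [hvcoe, hσx', map_zpow, hAx, SubgroupClass.coe_zpow]
    have hZm : Z ^ m = u ^ m := by
      apply Subtype.ext
      rw [SubgroupClass.coe_zpow, SubgroupClass.coe_zpow]
      exact h5
    have hZeq : Z = u ^ m * φ ((u ^ m)⁻¹ * u) := by rw [hZ, hvu]
    have he1 : (u ^ m)⁻¹ * u = u ^ (1 - m) := by group
    rw [hZeq, he1] at hZm
    have hcm : Commute (u ^ m) (φ (u ^ (1 - m))) := by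
      have : (u ^ m) * (φ (u ^ (1 - m))) = (φ (u ^ (1 - m))) * (u ^ m) := by
        apply Subtype.ext
        rw [Subgroup.coe_mul, Subgroup.coe_mul]
        exact hcomm _ (u ^ m).2 _ (φ (u ^ (1 - m))).2
      exact this
    rw [hcm.mul_zpow, ← zpow_mul, ← map_zpow, ← zpow_mul] at hZm
    have he2 : (1 - m) * m = t := by rw [ht]; ring
    rw [he2] at hZm
    calc φ (u ^ t) = (u ^ (m * m))⁻¹ * (u ^ (m * m) * φ (u ^ t)) := by group
      _ = (u ^ (m * m))⁻¹ * u ^ m := by rw [hZm]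
      _ = u ^ t := by
          rw [ht, ← zpow_neg, ← zpow_add]
          congr 1
          ring
  -- specialize to the generator
  set cc : (Subgroup.zpowers c) := ⟨c, hcmem⟩ with hcc
  have hgen : ∀ p : (Subgroup.zpowers c), ∃ z : ℤ, cc ^ z = p := by
    intro p
    obtain ⟨z, hz⟩ := Subgroup.mem_zpowers_iff.mp p.2
    exact ⟨z, Subtype.ext (by rw [SubgroupClass.coe_zpow]; exact hz)⟩
  have hordcc : orderOf cc = r ^ k := by
    rw [← hc]
    exact (orderOf_injective (Subgroup.zpowers c).subtype (Subgroup.zpowers c).subtype_injective cc).symm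
  obtain ⟨w, hw⟩ := hgen (φ cc)
  have h6 : cc ^ (w * t) = cc ^ t := by
    have h := main cc
    rw [map_zpow, ← hw, ← zpow_mul] at h
    exact h
  have h7 : cc ^ (t * (w - 1)) = 1 := by
    have he : t * (w - 1) = w * t + (-t) := by ring
    rw [he, zpow_add, h6, zpow_neg]
    simp
  have hdvd1 : ((r:ℤ)^k) ∣ t * (w - 1) := by
    have h := orderOf_dvd_iff_zpow_eq_one.mpr h7
    rw [hordcc] at h
    exact_mod_cast h
  have hrprime : Prime (r : ℤ) := Nat.prime_iff_prime_int.mp hr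
  -- r^k divides t
  have hrk_t : ((r:ℤ)^k) ∣ t := by
    by_contra hnd
    have hk1 : 1 ≤ k := by
      rcases Nat.eq_zero_or_pos k with h0 | h
      · exact absurd (by rw [h0, pow_zero]; exact one_dvd t) hnd
      · exact h
    have hrw : (r:ℤ) ∣ w - 1 := by
      by_contra hrw
      have hcop : IsCoprime ((r:ℤ)^k) (w - 1) :=
        (hrprime.coprime_iff_not_dvd.mpr hrw).pow_left
      exact hnd (hcop.dvd_of_dvd_mul_right hdvd1)
    have hpow := aux_pow_dvd hr hrw (k - 1)
    have hk' : 1 + (k - 1) = k := by omega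
    rw [hk'] at hpow
    set R := r ^ (k - 1) with hR
    have hfix7 : cc ^ ((w : ℤ) ^ R) = cc := by
      have h9 : cc ^ ((w:ℤ) ^ R - 1) = 1 := by
        apply orderOf_dvd_iff_zpow_eq_one.mp
        rw [hordcc]
        exact_mod_cast hpow
      have he : (w:ℤ) ^ R = ((w:ℤ) ^ R - 1) + 1 := by ring
      calc cc ^ ((w : ℤ) ^ R) = cc ^ (((w:ℤ) ^ R - 1) + 1) := by rw [← he]
        _ = cc ^ ((w:ℤ) ^ R - 1) * cc ^ (1:ℤ) := by rw [zpow_add]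
        _ = cc := by rw [h9, one_mul, zpow_one]
    have h8 : ∀ e : ℕ, (φ ^ e) cc = cc ^ ((w:ℤ) ^ e) := by
      intro e
      induction e with
      | zero => simp
      | succ n ih =>
        rw [pow_succ, MulAut.mul_apply, ← hw, map_zpow, ih, ← zpow_mul, ← pow_succ]
    have h9 : φ ^ R = 1 := by
      ext p
      obtain ⟨zp, rfl⟩ := hgen p
      rw [map_zpow, h8 R, hfix7, MulAut.one_apply]
    have h10 : orderOf φ ∣ R := orderOf_dvd_of_pow_eq_one h9
    obtain ⟨j, _, hje⟩ := (Nat.dvd_prime_pow hr).mp h10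
    exact hφord ⟨j, hje⟩
  have hfact : t = m * (1 - m) := by rw [ht]; ring
  rw [hfact] at hrk_t
  by_cases hdm : (r:ℤ) ∣ m
  · -- σ = 0 case
    have hnd2 : ¬ (r:ℤ) ∣ (1 - m) := by
      intro hd
      have h : (r:ℤ) ∣ 1 := by
        have := dvd_add hdm hd
        simpa using this
      exact hrprime.not_dvd_one h
    have hcop : IsCoprime ((r:ℤ)^k) (1 - m) :=
      (hrprime.coprime_iff_not_dvd.mpr hnd2).pow_left
    have hdvdm : ((r:ℤ)^k) ∣ m := hcop.dvd_of_dvd_mul_right hrk_t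
    left
    intro x hx
    obtain ⟨zx, rfl⟩ := Subgroup.mem_zpowers_iff.mp hx
    have h1 : σ (c ^ zx) = 1 := by
      rw [hσpow _ hx, ← zpow_mul]
      apply orderOf_dvd_iff_zpow_eq_one.mp
      rw [hc]
      push_cast
      exact Dvd.dvd.mul_left hdvdm zx
    exact ⟨h1, by rw [hγσ _ hx, h1, map_one]⟩
  · -- σ = 1 case
    have hcop : IsCoprime ((r:ℤ)^k) m :=
      (hrprime.coprime_iff_not_dvd.mpr hdm).pow_left
    have hdvd1m : ((r:ℤ)^k) ∣ (1 - m) := hcop.dvd_of_dvd_mul_left hrk_t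
    have hm1 : ((r:ℤ)^k) ∣ m - 1 := by
      have h := dvd_neg.mpr hdvd1m
      rwa [neg_sub] at h
    have hfix : ∀ y ∈ (Subgroup.zpowers c), σ y = y := by
      intro y hy
      obtain ⟨zy, rfl⟩ := Subgroup.mem_zpowers_iff.mp hy
      rw [hσpow _ hy]
      have hone : (c ^ zy) ^ (m - 1) = 1 := by
        rw [← zpow_mul]
        apply orderOf_dvd_iff_zpow_eq_one.mp
        rw [hc]
        push_cast
        exact Dvd.dvd.mul_left hm1 zy
      have he : m = (m - 1) + 1 := by ring
      calc (c ^ zy) ^ m = (c ^ zy) ^ ((m - 1) + 1) := by rw [← he]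
        _ = (c ^ zy) ^ (m - 1) * (c ^ zy) ^ (1:ℤ) := by rw [zpow_add]
        _ = c ^ zy := by rw [hone, one_mul, zpow_one]
    right
    intro x hx
    have hxi : x⁻¹ ∈ (Subgroup.zpowers c) := (Subgroup.zpowers c).inv_mem hx
    refine ⟨hfix x hx, by rw [hγσ x hx, hfix x hx], ?_⟩
    rw [hγσ _ hxi, hfix _ hxi, ← map_mul, mul_inv_cancel, map_one]
end HGS
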